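/- Let p ∈ [2,∞] and q ∈ [1,∞] with 2/p + 2/q = 1. Assume β is integrable with expectation β̄ = Eβ ∈ ℝ^n, that the residue ρ(β̄) belongs to L^p(Ω,μ), and that K_q(Γ) < ∞. Then the trace of the covariance matrix of β satisfies Tr(Cov(β)) = E‖β − β̄‖₂² ≤ n · m² · K_q(Γ) · ‖ρ(β̄)‖²_{L^p(Ω)}. -/

import Mathlib

open MeasureTheory ProbabilityTheory ENNReal Matrix Filter

noncomputable section

/-- Removed from Mathlib since the original was written; restated with its old meaning. -/
theorem Matrix.isHermitian_transpose_mul_self {m n : Type*} [Fintype m]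
    (A : Matrix m n ℝ) : (Aᵀ * A).IsHermitian := by
  rw [← conjTranspose_eq_transpose_of_trivial]
  exact isHermitian_conjTranspose_mul_self A

/-- The smallest eigenvalue `s₁(A)` of the symmetric positive semidefinite matrix `AᵀA`. -/
def s1 {m n : ℕ} (A : Matrix (Fin m) (Fin n) ℝ) : ℝ :=
  ⨅ i, (Matrix.isHermitian_transpose_mul_self A).eigenvalues i

/-- Euclidean norm on `ℝ^n`. -/
def enorm2 {n : ℕ} (v : Fin n → ℝ) : ℝ := Real.sqrt (∑ j, v j ^ 2)

/-- The matrix `Γ(x)` with entries `Γ(x)_{ij} = γ_j(x⁽ⁱ⁾)`. -/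
def dmat {Ω : Type*} {n m : ℕ} (γ : Fin n → Ω → ℝ) (x : Fin m → Ω) :
    Matrix (Fin m) (Fin n) ℝ := Matrix.of fun i j => γ j (x i)

/-- The matrix `R(x) = (Γ(x)ᵀΓ(x))⁻¹Γ(x)ᵀ`. -/
def Rmat {Ω : Type*} {n m : ℕ} (γ : Fin n → Ω → ℝ) (x : Fin m → Ω) :
    Matrix (Fin n) (Fin m) ℝ := ((dmat γ x)ᵀ * dmat γ x)⁻¹ * (dmat γ x)ᵀ

/-- `β(x) = R(x) F(x)` where `F(x)_i = f(x⁽ⁱ⁾)`. -/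
def betaFn {Ω : Type*} {n m : ℕ} (γ : Fin n → Ω → ℝ) (f : Ω → ℝ) (x : Fin m → Ω) :
    Fin n → ℝ := Rmat γ x *ᵥ fun i => f (x i)

/-- The residue `ρ(a)(ω) = f(ω) - ∑ j a_j γ_j(ω)`. -/
def resid {Ω : Type*} {n : ℕ} (γ : Fin n → Ω → ℝ) (f : Ω → ℝ) (a : Fin n → ℝ) : Ω → ℝ :=
  fun ω => f ω - ∑ j, a j * γ j ω

/-! ### Auxiliary linear algebra lemmas -/

lemma quad_lower {k : ℕ} (B : Matrix (Fin k) (Fin k) ℝ) (hB : B.IsHermitian) (c : ℝ)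
    (hc : ∀ i, c ≤ hB.eigenvalues i) (u : Fin k → ℝ) :
    c * (u ⬝ᵥ u) ≤ u ⬝ᵥ (B *ᵥ u) := by
  classical
  set U : Matrix (Fin k) (Fin k) ℝ := (hB.eigenvectorUnitary : Matrix (Fin k) (Fin k) ℝ) with hU
  have hstar : ∀ (M : Matrix (Fin k) (Fin k) ℝ), star M = Mᵀ := fun M => by
    ext i j; simp [Matrix.star_apply]
  have hUU : U * Uᵀ = 1 := by
    have := (Unitary.mem_iff.mp hB.eigenvectorUnitary.2).2
    rwa [hstar] at this
  set y : Fin k → ℝ := Uᵀ *ᵥ u with hy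
  have hyy : y ⬝ᵥ y = u ⬝ᵥ u := by
    rw [hy, Matrix.dotProduct_mulVec, Matrix.vecMul_transpose, Matrix.mulVec_mulVec, hUU,
      Matrix.one_mulVec]
  have hd : (RCLike.ofReal : ℝ → ℝ) ∘ hB.eigenvalues = hB.eigenvalues := by ext i; simp
  have hBu : B *ᵥ u = U *ᵥ (Matrix.diagonal hB.eigenvalues *ᵥ y) := by
    conv_lhs => rw [hB.spectral_theorem]
    rw [Unitary.conjStarAlgAut_apply, hstar, hd, ← hU, hy]
    simp [← Matrix.mulVec_mulVec, Matrix.mul_assoc]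
  have hquad : u ⬝ᵥ (B *ᵥ u) = ∑ i, hB.eigenvalues i * y i ^ 2 := by
    rw [hBu, Matrix.dotProduct_mulVec, ← Matrix.mulVec_transpose, ← hy]
    simp [dotProduct, Matrix.mulVec_diagonal, pow_two]
    exact Finset.sum_congr rfl fun i _ => by ring
  rw [hquad, ← hyy]
  have hsum : c * (y ⬝ᵥ y) = ∑ i, c * y i ^ 2 := by
    simp [dotProduct, Finset.mul_sum, pow_two]
  rw [hsum]
  exact Finset.sum_le_sum fun i _ => mul_le_mul_of_nonneg_right (hc i) (sq_nonneg _)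

lemma ct_eq {m n : ℕ} (A : Matrix (Fin m) (Fin n) ℝ) : Aᴴ * A = Aᵀ * A := by
  rw [Matrix.conjTranspose_eq_transpose_of_trivial]

lemma eig_nonneg {m n : ℕ} (A : Matrix (Fin m) (Fin n) ℝ) (i : Fin n) :
    0 ≤ (Matrix.isHermitian_transpose_mul_self A).eigenvalues i :=
  (Matrix.posSemidef_conjTranspose_mul_self A).eigenvalues_nonneg i

lemma eig_pos {m n : ℕ} (A : Matrix (Fin m) (Fin n) ℝ) (hu : IsUnit (Aᵀ * A).det) (i : Fin n) :
    0 < (Matrix.isHermitian_transpose_mul_self A).eigenvalues i := by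
  rcases lt_or_eq_of_le (eig_nonneg A i) with h | h
  · exact h
  · exfalso
    have hdet := (Matrix.isHermitian_transpose_mul_self A).det_eq_prod_eigenvalues
    have h0 : (Aᵀ * A).det = 0 := by
      rw [hdet, Finset.prod_eq_zero (Finset.mem_univ i)]
      simp [← h]
    exact hu.ne_zero h0

lemma s1_pos {m n : ℕ} (hn : 1 ≤ n) (A : Matrix (Fin m) (Fin n) ℝ)
    (hu : IsUnit (Aᵀ * A).det) : 0 < s1 A := by
  haveI : Nonempty (Fin n) := ⟨⟨0, hn⟩⟩
  obtain ⟨i, hi⟩ := exists_eq_ciInf_of_finite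
    (f := (Matrix.isHermitian_transpose_mul_self A).eigenvalues)
  rw [s1, ← hi]
  exact eig_pos A hu i

lemma s1_le_eig {m n : ℕ} (A : Matrix (Fin m) (Fin n) ℝ) (i : Fin n) :
    s1 A ≤ (Matrix.isHermitian_transpose_mul_self A).eigenvalues i :=
  ciInf_le (Set.Finite.bddBelow (Set.finite_range _)) i

lemma key_ineq {m n : ℕ} (hn : 1 ≤ n) (A : Matrix (Fin m) (Fin n) ℝ)
    (hu : IsUnit (Aᵀ * A).det) (v : Fin m → ℝ) :
    ∑ j, (((Aᵀ * A)⁻¹ * Aᵀ) *ᵥ v) j ^ 2 ≤ (s1 A)⁻¹ * ∑ i, v i ^ 2 := by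
  classical
  set B : Matrix (Fin n) (Fin n) ℝ := Aᵀ * A with hB
  set u : Fin n → ℝ := (B⁻¹ * Aᵀ) *ᵥ v with hudef
  set P : Matrix (Fin m) (Fin m) ℝ := A * B⁻¹ * Aᵀ with hP
  have hBsymm : Bᵀ = B := by
    rw [hB, Matrix.transpose_mul, Matrix.transpose_transpose]
  have hql : s1 A * (u ⬝ᵥ u) ≤ u ⬝ᵥ (B *ᵥ u) := by
    have h1 : s1 A * (u ⬝ᵥ u) ≤ u ⬝ᵥ ((Aᴴ * A) *ᵥ u) :=
      quad_lower (Aᴴ * A) (Matrix.isHermitian_transpose_mul_self A)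
        (s1 A) (fun i => s1_le_eig A i) u
    rwa [ct_eq, ← hB] at h1
  have h2 : u ⬝ᵥ (B *ᵥ u) = (A *ᵥ u) ⬝ᵥ (A *ᵥ u) := by
    rw [hB, ← Matrix.mulVec_mulVec, Matrix.dotProduct_mulVec, ← Matrix.mulVec_transpose,
      Matrix.transpose_transpose]
  have h3 : A *ᵥ u = P *ᵥ v := by
    rw [hudef, Matrix.mulVec_mulVec, hP, Matrix.mul_assoc]
  set w : Fin m → ℝ := P *ᵥ v with hw
  have hPt : Pᵀ = P := by
    rw [hP, Matrix.transpose_mul, Matrix.transpose_mul, Matrix.transpose_transpose,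
      Matrix.transpose_nonsing_inv, hBsymm, Matrix.mul_assoc]
  have hPP : P * P = P := by
    rw [hP]
    have : A * B⁻¹ * Aᵀ * (A * B⁻¹ * Aᵀ) = A * (B⁻¹ * (Aᵀ * A) * B⁻¹) * Aᵀ := by
      simp only [Matrix.mul_assoc]
    rw [this, ← hB, Matrix.nonsing_inv_mul B hu, Matrix.one_mul]
  have hww : w ⬝ᵥ w = w ⬝ᵥ v := by
    conv_lhs => rw [hw, Matrix.dotProduct_mulVec, ← Matrix.mulVec_transpose, hPt,
      Matrix.mulVec_mulVec, hPP, ← hw]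
  have hcs : (w ⬝ᵥ v) ^ 2 ≤ (w ⬝ᵥ w) * (v ⬝ᵥ v) := by
    have := Finset.sum_mul_sq_le_sq_mul_sq (Finset.univ : Finset (Fin m)) w v
    simpa [dotProduct, pow_two, mul_assoc, mul_comm, mul_left_comm] using this
  have hwle : w ⬝ᵥ w ≤ v ⬝ᵥ v := by
    have hww0 : 0 ≤ w ⬝ᵥ w := by
      simp only [dotProduct]
      exact Finset.sum_nonneg fun i _ => mul_self_nonneg _
    have hvv0 : 0 ≤ v ⬝ᵥ v := by
      simp only [dotProduct]
      exact Finset.sum_nonneg fun i _ => mul_self_nonneg _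
    nlinarith [hcs, hww]
  have hchain : s1 A * (u ⬝ᵥ u) ≤ v ⬝ᵥ v := by
    calc s1 A * (u ⬝ᵥ u) ≤ u ⬝ᵥ (B *ᵥ u) := hql
    _ = w ⬝ᵥ w := by rw [h2, h3]
    _ ≤ v ⬝ᵥ v := hwle
  have hs1 := s1_pos hn A hu
  have hdpn : u ⬝ᵥ u = ∑ j, u j ^ 2 := by simp [dotProduct, pow_two]
  have hdpv : v ⬝ᵥ v = ∑ i, v i ^ 2 := by simp [dotProduct, pow_two]
  rw [← hdpn, ← hdpv]
  calc u ⬝ᵥ u = (s1 A)⁻¹ * (s1 A * (u ⬝ᵥ u)) := by field_simp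
  _ ≤ (s1 A)⁻¹ * (v ⬝ᵥ v) := mul_le_mul_of_nonneg_left hchain (inv_nonneg.mpr hs1.le)

lemma beta_sub {Ω : Type*} {n m : ℕ} (γ : Fin n → Ω → ℝ) (f : Ω → ℝ) (βbar : Fin n → ℝ)
    (x : Fin m → Ω) (hu : IsUnit ((dmat γ x)ᵀ * dmat γ x).det) :
    betaFn γ f x - βbar = Rmat γ x *ᵥ fun i => resid γ f βbar (x i) := by
  have hF : (fun i => f (x i)) = (dmat γ x *ᵥ βbar) + fun i => resid γ f βbar (x i) := by
    funext i
    simp [Matrix.mulVec, dotProduct, dmat, resid, mul_comm]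
  have hRG : Rmat γ x * dmat γ x = 1 := by
    rw [Rmat, Matrix.mul_assoc, Matrix.nonsing_inv_mul _ hu]
  rw [betaFn, hF, Matrix.mulVec_add, Matrix.mulVec_mulVec, hRG, Matrix.one_mulVec]
  abel

/-! ### Measurability lemmas -/

section meas
variable {Ω : Type*} [MeasurableSpace Ω] {α : Type*} [MeasurableSpace α]

lemma meas_det {k : ℕ} (M : α → Matrix (Fin k) (Fin k) ℝ)
    (h : ∀ i j, Measurable fun a => M a i j) : Measurable fun a => (M a).det := by
  simp only [Matrix.det_apply]
  refine Finset.measurable_sum _ fun σ _ => Measurable.const_smul ?_ _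
  exact Finset.measurable_prod _ fun i _ => h _ _

lemma meas_inv_entry {k : ℕ} (M : α → Matrix (Fin k) (Fin k) ℝ)
    (h : ∀ i j, Measurable fun a => M a i j) (i j : Fin k) :
    Measurable fun a => (M a)⁻¹ i j := by
  simp only [Matrix.inv_def, Matrix.smul_apply, Ring.inverse_eq_inv', smul_eq_mul]
  refine Measurable.mul (meas_det M h).inv ?_
  simp only [Matrix.adjugate_apply]
  exact meas_det (fun a => (M a).updateRow j (Pi.single i 1)) (fun i' j' => by
    by_cases hij : i' = j
    · subst hij; simp [Matrix.updateRow_apply]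
    · simpa [Matrix.updateRow_apply, hij] using h i' j')

variable {n m : ℕ} (γ : Fin n → Ω → ℝ) (f : Ω → ℝ)

lemma meas_dmat (hγ : ∀ j, Measurable (γ j)) (i : Fin m) (j : Fin n) :
    Measurable fun x : Fin m → Ω => dmat γ x i j :=
  (hγ j).comp (measurable_pi_apply i)

lemma meas_B (hγ : ∀ j, Measurable (γ j)) (i j : Fin n) :
    Measurable fun x : Fin m → Ω => ((dmat γ x)ᵀ * dmat γ x) i j := by
  simp only [Matrix.mul_apply, Matrix.transpose_apply]
  exact Finset.measurable_sum _ fun k _ => (meas_dmat γ hγ k i).mul (meas_dmat γ hγ k j)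

lemma meas_Rmat (hγ : ∀ j, Measurable (γ j)) (j : Fin n) (i : Fin m) :
    Measurable fun x : Fin m → Ω => Rmat γ x j i := by
  simp only [Rmat, Matrix.mul_apply, Matrix.transpose_apply]
  refine Finset.measurable_sum _ fun k _ => Measurable.mul ?_ (meas_dmat γ hγ i k)
  exact meas_inv_entry _ (meas_B γ hγ) j k

lemma meas_betaFn (hγ : ∀ j, Measurable (γ j)) (hf : Measurable f) (j : Fin n) :
    Measurable fun x : Fin m → Ω => betaFn γ f x j := by
  simp only [betaFn, Matrix.mulVec, dotProduct]
  exact Finset.measurable_sum _ fun i _ =>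
    (meas_Rmat γ hγ j i).mul (hf.comp (measurable_pi_apply i))

lemma meas_resid (hγ : ∀ j, Measurable (γ j)) (hf : Measurable f) (a : Fin n → ℝ) :
    Measurable (resid γ f a) := by
  refine hf.sub ?_
  exact Finset.measurable_sum _ fun j _ => (hγ j).const_mul _

end meas

/-! ### Measure-theoretic lemmas -/

lemma eLp_sq {Ω : Type*} [MeasurableSpace Ω] (μ : Measure Ω) (g : Ω → ℝ) (p : ℝ≥0∞) :
    eLpNorm (fun ω => g ω ^ 2) (p / 2) μ = eLpNorm g p μ ^ 2 := by
  have h := eLpNorm_norm_rpow g (p := p / 2) (μ := μ) (q := 2) (by norm_num)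
  have heq : (fun ω => ‖g ω‖ ^ (2 : ℝ)) = fun ω => g ω ^ 2 := by
    funext ω
    rw [show (2:ℝ) = ((2:ℕ):ℝ) by norm_num, Real.rpow_natCast]
    exact sq_abs _
  rw [heq] at h
  rw [h, ENNReal.ofReal_ofNat, ENNReal.div_mul_cancel (by norm_num) (by norm_num),
    show (2:ℝ) = ((2:ℕ):ℝ) by norm_num, ENNReal.rpow_natCast]

lemma mp_eval {Ω : Type*} [MeasurableSpace Ω] (μ : Measure Ω) [IsProbabilityMeasure μ]
    {m : ℕ} (i : Fin m) :
    MeasurePreserving (fun x : Fin m → Ω => x i) (Measure.pi fun _ : Fin m => μ) μ := by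
  refine ⟨measurable_pi_apply i, ?_⟩
  ext s hs
  rw [Measure.map_apply (measurable_pi_apply i) hs]
  have hpre : (fun x : Fin m → Ω => x i) ⁻¹' s
      = Set.pi Set.univ (Function.update (fun _ : Fin m => Set.univ) i s) := by
    ext x
    simp only [Set.mem_preimage, Set.mem_pi, Set.mem_univ, true_implies]
    constructor
    · intro hx j
      rcases eq_or_ne j i with rfl | hj
      · simpa using hx
      · simp [Function.update, hj]
    · intro hx
      have := hx i
      simpa using this
  rw [hpre, Measure.pi_pi]
  rw [show (∏ j, μ (Function.update (fun _ : Fin m => Set.univ) i s j)) =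
      ∏ j, if j = i then μ s else 1 from Finset.prod_congr rfl fun j _ => by
        rcases eq_or_ne j i with rfl | hj
        · simp [Function.update]
        · simp [Function.update, hj]]
  simp


lemma hhalf (a : ℝ≥0∞) : 1 / (a / 2) = 2 / a := by
  have h1 : ((2 : ℝ≥0∞))⁻¹ ≠ ⊤ := by simp
  have h2 : ((2 : ℝ≥0∞))⁻¹ ≠ 0 := by simp
  rw [one_div, div_eq_mul_inv a 2, ENNReal.mul_inv (Or.inr h1) (Or.inr h2),
    inv_inv, div_eq_mul_inv, mul_comm]

/-- main theorem -/
theorem stmt4 {Ω : Type*} [MeasurableSpace Ω] (μ : Measure Ω) [IsProbabilityMeasure μ]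
    (n m : ℕ) (hn : 1 ≤ n) (hm : 1 ≤ m)
    (γ : Fin n → Ω → ℝ) (hγ : ∀ j, Measurable (γ j))
    (f : Ω → ℝ) (hf : Measurable f)
    (hinv : ∀ᵐ x ∂(Measure.pi fun _ : Fin m => μ), IsUnit ((dmat γ x)ᵀ * dmat γ x).det)
    (hint : ∀ j, Integrable (fun x : Fin m → Ω => betaFn γ f x j)
      (Measure.pi fun _ : Fin m => μ))
    (βbar : Fin n → ℝ)
    (hβbar : βbar = fun j => ∫ x, betaFn γ f x j ∂(Measure.pi fun _ : Fin m => μ))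
    (p q : ℝ≥0∞) (hp : 2 ≤ p) (hq : 1 ≤ q) (hpq : 2 / p + 2 / q = 1)
    (hρ : MemLp (resid γ f βbar) p μ)
    (hK : eLpNorm (fun x : Fin m → Ω => (s1 (dmat γ x))⁻¹) (q / 2)
        (Measure.pi fun _ : Fin m => μ) < ⊤) :
    ∫⁻ x, ENNReal.ofReal (enorm2 (betaFn γ f x - βbar)) ^ 2
        ∂(Measure.pi fun _ : Fin m => μ)
      ≤ n * m ^ 2 *
        eLpNorm (fun x : Fin m → Ω => (s1 (dmat γ x))⁻¹) (q / 2)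
          (Measure.pi fun _ : Fin m => μ) *
        eLpNorm (resid γ f βbar) p μ ^ 2 := by
  set ν := Measure.pi fun _ : Fin m => μ with hν
  set g : (Fin m → Ω) → ℝ := fun x => ∑ j, (betaFn γ f x j - βbar j) ^ 2 with hg
  set ψ : (Fin m → Ω) → ℝ := fun x => ∑ i, (resid γ f βbar (x i)) ^ 2 with hψ
  set φ : (Fin m → Ω) → ℝ := fun x => (s1 (dmat γ x))⁻¹ with hφ
  set φ' : (Fin m → Ω) → ℝ := fun x => g x / ψ x with hφ'
  have hg0 : ∀ x, 0 ≤ g x := fun x => Finset.sum_nonneg fun j _ => sq_nonneg _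
  have hψ0 : ∀ x, 0 ≤ ψ x := fun x => Finset.sum_nonneg fun i _ => sq_nonneg _
  have hgmeas : Measurable g :=
    Finset.measurable_sum _ fun j _ =>
      ((meas_betaFn γ f hγ hf j).sub measurable_const).pow_const 2
  have hψmeas : Measurable ψ :=
    Finset.measurable_sum _ fun i _ =>
      ((meas_resid γ f hγ hf βbar).comp (measurable_pi_apply i)).pow_const 2
  have hφ'meas : Measurable φ' := hgmeas.div hψmeas
  have hae : ∀ᵐ x ∂ν, g x ≤ φ' x * ψ x ∧ |φ' x| ≤ |φ x| := by
    filter_upwards [hinv] with x hx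
    have hkey : g x ≤ φ x * ψ x := by
      have hb := beta_sub γ f βbar x hx
      have hk := key_ineq hn (dmat γ x) hx (fun i => resid γ f βbar (x i))
      have hgx : g x = ∑ j, ((Rmat γ x *ᵥ fun i => resid γ f βbar (x i)) j) ^ 2 := by
        rw [← hb]; simp [hg]
      rw [hgx]
      rw [Rmat] at *
      exact hk
    have hs1 := s1_pos hn (dmat γ x) hx
    constructor
    · rcases eq_or_lt_of_le (hψ0 x) with h0 | h0
      · have hk0 : g x ≤ 0 := by
          have := hkey
          rw [← h0, mul_zero] at this
          exact this
        have hgx0 : g x = 0 := le_antisymm hk0 (hg0 x)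
        simp [hφ', hgx0]
      · have hcancel : g x / ψ x * ψ x = g x := div_mul_cancel₀ _ h0.ne'
        exact hcancel.ge
    · rcases eq_or_lt_of_le (hψ0 x) with h0 | h0
      · have hz : φ' x = 0 := by
          rw [hφ']
          simp [← h0]
        rw [hz, abs_zero]
        exact abs_nonneg _
      · have h1 : 0 ≤ φ' x := div_nonneg (hg0 x) (hψ0 x)
        rw [abs_of_nonneg h1, abs_of_nonneg (inv_nonneg.mpr hs1.le)]
        rw [div_le_iff₀ h0]
        exact hkey
  have hLHS : ∀ x, ENNReal.ofReal (enorm2 (betaFn γ f x - βbar)) ^ 2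
      = ENNReal.ofReal (g x) := by
    intro x
    rw [enorm2, ← ENNReal.ofReal_pow (Real.sqrt_nonneg _),
      Real.sq_sqrt (Finset.sum_nonneg fun j _ => sq_nonneg _)]
    congr 1
  -- Sum bound for ψ
  have hp2 : (1 : ℝ≥0∞) ≤ p / 2 := by
    calc (1 : ℝ≥0∞) = 2 / 2 := (ENNReal.div_self (by norm_num) (by norm_num)).symm
    _ ≤ p / 2 := ENNReal.div_le_div_right hp 2
  have hψbound : eLpNorm ψ (p / 2) ν ≤ m * eLpNorm (resid γ f βbar) p μ ^ 2 := by
    have hsum : ψ = ∑ i ∈ Finset.univ, (fun x : Fin m → Ω => (resid γ f βbar (x i)) ^ 2) := by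
      funext x
      rw [hψ]
      simp
    rw [hsum]
    refine (eLpNorm_sum_le ?_ hp2).trans ?_
    · exact fun i _ =>
        (((meas_resid γ f hγ hf βbar).comp (measurable_pi_apply i)).pow_const
          2).aestronglyMeasurable
    have heach : ∀ i : Fin m,
        eLpNorm (fun x : Fin m → Ω => (resid γ f βbar (x i)) ^ 2) (p / 2) ν
          = eLpNorm (resid γ f βbar) p μ ^ 2 := by
      intro i
      have hcomp : (fun x : Fin m → Ω => (resid γ f βbar (x i)) ^ 2)
          = (fun ω => (resid γ f βbar ω) ^ 2) ∘ (fun x : Fin m → Ω => x i) := rfl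
      rw [hcomp, eLpNorm_comp_measurePreserving
        (((meas_resid γ f hγ hf βbar).pow_const 2).aestronglyMeasurable) (mp_eval μ i),
        eLp_sq]
    rw [Finset.sum_congr rfl fun i _ => heach i, Finset.sum_const, Finset.card_univ,
      Fintype.card_fin, nsmul_eq_mul]
  have hconj : (1 : ℝ≥0∞) / 1 = 1 / (q / 2) + 1 / (p / 2) := by
    rw [hhalf q, hhalf p, add_comm, hpq]
    norm_num
  have hcast : (m : ℝ≥0∞) ≤ (n : ℝ≥0∞) * (m : ℝ≥0∞) ^ 2 := by
    have hnat : m ≤ n * m ^ 2 := by nlinarith [hn, hm]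
    calc (m : ℝ≥0∞) ≤ ((n * m ^ 2 : ℕ) : ℝ≥0∞) := by exact_mod_cast hnat
    _ = (n : ℝ≥0∞) * (m : ℝ≥0∞) ^ 2 := by push_cast; ring
  calc ∫⁻ x, ENNReal.ofReal (enorm2 (betaFn γ f x - βbar)) ^ 2 ∂ν
      = ∫⁻ x, ENNReal.ofReal (g x) ∂ν := by
        exact lintegral_congr fun x => hLHS x
    _ ≤ ∫⁻ x, (‖φ' x * ψ x‖₊ : ℝ≥0∞) ∂ν := by
        refine lintegral_mono_ae ?_
        filter_upwards [hae] with x hx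
        exact le_trans (ENNReal.ofReal_le_ofReal hx.1) (Real.ofReal_le_enorm _)
    _ = eLpNorm (fun x => φ' x * ψ x) 1 ν := (eLpNorm_one_eq_lintegral_enorm (f := fun x => φ' x * ψ x) (μ := ν)).symm
    _ ≤ eLpNorm φ' (q / 2) ν * eLpNorm ψ (p / 2) ν := by
        haveI : ENNReal.HolderTriple (q / 2) (p / 2) 1 :=
          ⟨by simpa [one_div, eq_comm] using hconj⟩
        simpa using eLpNorm_le_eLpNorm_mul_eLpNorm'_of_norm hφ'meas.aestronglyMeasurable
          hψmeas.aestronglyMeasurable (fun a b => a * b) 1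
          (Eventually.of_forall fun x => le_of_eq (by simp [abs_mul]))
    _ ≤ eLpNorm φ (q / 2) ν * eLpNorm ψ (p / 2) ν := by
        refine mul_le_mul_left (eLpNorm_mono_ae ?_) _
        filter_upwards [hae] with x hx
        simpa [Real.norm_eq_abs] using hx.2
    _ ≤ eLpNorm φ (q / 2) ν * (m * eLpNorm (resid γ f βbar) p μ ^ 2) :=
        mul_le_mul_right hψbound _
    _ = (m : ℝ≥0∞) * (eLpNorm φ (q / 2) ν * eLpNorm (resid γ f βbar) p μ ^ 2) := by ring
    _ ≤ ((n : ℝ≥0∞) * (m : ℝ≥0∞) ^ 2) *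
          (eLpNorm φ (q / 2) ν * eLpNorm (resid γ f βbar) p μ ^ 2) :=
        mul_le_mul_left hcast _
    _ = n * m ^ 2 * eLpNorm φ (q / 2) ν * eLpNorm (resid γ f βbar) p μ ^ 2 := by ring
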